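/- arXiv:1910.14485 — 2 statements merged into one kernel-verified Lean document; each statement's English description precedes it below -/
import Mathlib

section
/- As x → ∞, the number of sixth-power free integers n with |n| ≤ x is asymptotic to (1890/π⁶)·x; that is, the quotient of the count #{n ∈ ℤ : n sixth-power free, |n| ≤ x} by x tends to 2/ζ(6) = 1890/π⁶ as x → ∞. -/
open Filter

/-- A nonzero integer is sixth-power free if no `p⁶` divides it. -/
def SixthPowerFree (n : ℤ) : Prop :=
  n ≠ 0 ∧ ∀ p : ℕ, p.Prime → ¬ ((p : ℤ) ^ 6 ∣ n)

section SPFAux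
open ArithmeticFunction Complex
open scoped LSeries.notation
open scoped ArithmeticFunction.Moebius ArithmeticFunction.zeta

theorem bern6 : bernoulli 6 = 1/42 := by
  have h5 : bernoulli' 5 = 0 := by
    rw [bernoulli'_def]
    norm_num [Finset.sum_range_succ, (by decide : Nat.choose 5 2 = 10)]
  have h6 : bernoulli' 6 = 1/42 := by
    rw [bernoulli'_def]
    norm_num [Finset.sum_range_succ, h5,
      (by decide : Nat.choose 6 2 = 15), (by decide : Nat.choose 6 4 = 15)]
  rw [bernoulli_eq_bernoulli'_of_ne_one (by norm_num), h6]

theorem zeta6 : HasSum (fun n : ℕ => (1:ℝ) / (n : ℝ) ^ 6) (Real.pi ^ 6 / 945) := by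
  have h := hasSum_zeta_nat (k := 3) (by norm_num)
  rw [bern6] at h
  norm_num [Nat.factorial] at h
  convert h using 1
  · funext n; rw [one_div]
  · ring

theorem abs_moebius_real (d : ℕ) : |((μ d : ℤ) : ℝ)| ≤ 1 := by
  have h : |(μ d : ℤ)| ≤ 1 := abs_moebius_le_one
  calc |((μ d : ℤ) : ℝ)| = ((|(μ d : ℤ)| : ℤ) : ℝ) := by push_cast; ring
  _ ≤ 1 := by exact_mod_cast h

theorem moebius_sum : ∑' d : ℕ, (μ d : ℝ) / (d : ℝ) ^ 6 = 945 / Real.pi ^ 6 := by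
  have hpi : (0:ℝ) < Real.pi ^ 6 := by positivity
  have hterm : ∀ n : ℕ, LSeries.term ↗μ 6 n = (((μ n : ℝ) / (n:ℝ)^6 : ℝ) : ℂ) := by
    intro n
    rcases Nat.eq_zero_or_pos n with rfl | hn
    · simp [LSeries.term_zero]
    · rw [LSeries.term_of_ne_zero hn.ne']
      push_cast [Complex.cpow_natCast]
      norm_num
  have hLmu : LSeries ↗μ 6 = (((∑' d : ℕ, (μ d : ℝ) / (d : ℝ) ^ 6) : ℝ) : ℂ) := by
    rw [LSeries, ofReal_tsum]
    exact tsum_congr hterm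
  have hLzeta : LSeries ↗ζ 6 = (((Real.pi ^ 6 / 945 : ℝ)) : ℂ) := by
    rw [LSeries, ← zeta6.tsum_eq, ofReal_tsum]
    apply tsum_congr
    intro n
    rcases Nat.eq_zero_or_pos n with rfl | hn
    · simp [LSeries.term_zero]
    · rw [LSeries.term_of_ne_zero hn.ne']
      simp only [natCoe_apply, zeta_apply, hn.ne', if_false, Nat.cast_one, Complex.cpow_natCast]
      push_cast
      norm_num
  have key := LSeries_zeta_mul_Lseries_moebius (s := 6) (by norm_num)
  rw [hLzeta, hLmu, ← ofReal_mul, (by norm_num : (1:ℂ) = ((1:ℝ):ℂ)), ofReal_inj] at key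
  field_simp at key ⊢
  linarith [key]

end SPFAux

section SPFAux2
open ArithmeticFunction Finset
open scoped ArithmeticFunction.Moebius

/-- the 6-free predicate on naturals -/
def NatFree6 (n : ℕ) : Prop := ∀ p : ℕ, p.Prime → ¬ p ^ 6 ∣ n

open Classical in
theorem moebius_indicator {n : ℕ} (hn : 1 ≤ n) :
    (∑ d ∈ Finset.Icc 1 n, if d ^ 6 ∣ n then (μ d : ℤ) else 0)
      = if NatFree6 n then 1 else 0 := by
  have hn0 : n ≠ 0 := by omega
  set F : Finset ℕ := n.primeFactors.filter (fun p => p ^ 6 ∣ n) with hF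
  have hFprime : ∀ p ∈ F, p.Prime := fun p hp =>
    Nat.prime_of_mem_primeFactors (Finset.mem_filter.mp hp).1
  have hFpow : ∀ p ∈ F, p ^ 6 ∣ n := fun p hp => (Finset.mem_filter.mp hp).2
  set r : ℕ := ∏ p ∈ F, p with hr
  have hr0 : r ≠ 0 := Finset.prod_ne_zero_iff.mpr (fun p hp => (hFprime p hp).pos.ne')
  have hrfact : ∀ q, r.factorization q = if q ∈ F then 1 else 0 := by
    intro q
    rw [hr, Nat.factorization_prod (fun p hp => (hFprime p hp).pos.ne')]
    rw [Finsupp.finset_sum_apply]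
    rw [Finset.sum_congr rfl (fun p hp => by
      rw [(hFprime p hp).factorization, Finsupp.single_apply])]
    exact Finset.sum_ite_eq' F q (fun _ => 1)
  have hrsq : Squarefree r := Nat.squarefree_of_factorization_le_one hr0 (by
    intro q; rw [hrfact]; split <;> norm_num)
  have hnfact : ∀ q ∈ F, 6 ≤ n.factorization q := fun q hq =>
    (Nat.Prime.pow_dvd_iff_le_factorization (hFprime q hq) hn0).mp (hFpow q hq)
  have hr_dvd : r ∣ n := by
    rw [← Nat.factorization_le_iff_dvd hr0 hn0]
    intro q
    rw [hrfact]
    split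
    · exact le_trans (by norm_num) (hnfact q (by assumption))
    · exact Nat.zero_le _
  -- key equivalence
  have key : ∀ d : ℕ, Squarefree d → (d ^ 6 ∣ n ↔ d ∣ r) := by
    intro d hd
    have hd0 : d ≠ 0 := hd.ne_zero
    have hdle : ∀ q, d.factorization q ≤ 1 :=
      (Nat.squarefree_iff_factorization_le_one hd0).mp hd
    have hmem : ∀ q, d.factorization q ≠ 0 → q.Prime ∧ q ∣ d := by
      intro q hq
      have : q ∈ d.factorization.support := Finsupp.mem_support_iff.mpr hq
      rw [Nat.support_factorization] at this
      exact ⟨Nat.prime_of_mem_primeFactors this, Nat.dvd_of_mem_primeFactors this⟩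
    constructor
    · intro h6
      rw [← Nat.factorization_le_iff_dvd hd0 hr0]
      intro q
      rw [hrfact]
      rcases Nat.eq_zero_or_pos (d.factorization q) with h | h
      · rw [h]; exact Nat.zero_le _
      · obtain ⟨hq, hqd⟩ := hmem q h.ne'
        have hq6 : q ^ 6 ∣ n := dvd_trans (pow_dvd_pow_of_dvd hqd 6) h6
        have hqn : q ∣ n := dvd_trans hqd (dvd_trans (dvd_pow_self d (by norm_num : (6:ℕ) ≠ 0)) h6)
        have hqF : q ∈ F := Finset.mem_filter.mpr
          ⟨Nat.mem_primeFactors.mpr ⟨hq, hqn, hn0⟩, hq6⟩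
        rw [if_pos hqF]
        exact hdle q
    · intro hdr
      rw [← Nat.factorization_le_iff_dvd (pow_ne_zero 6 hd0) hn0]
      intro q
      rw [Nat.factorization_pow, Finsupp.smul_apply, smul_eq_mul]
      have hdrf : d.factorization q ≤ r.factorization q :=
        (Nat.factorization_le_iff_dvd hd0 hr0).mpr hdr q
      rw [hrfact] at hdrf
      by_cases hqF : q ∈ F
      · rw [if_pos hqF] at hdrf
        calc 6 * d.factorization q ≤ 6 * 1 := by
              exact Nat.mul_le_mul_left 6 hdrf
        _ ≤ n.factorization q := hnfact q hqF
      · rw [if_neg hqF] at hdrf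
        omega
  -- rewrite the sum as a sum over divisors of r
  have hstep1 : (∑ d ∈ Finset.Icc 1 n, if d ^ 6 ∣ n then (μ d : ℤ) else 0)
      = ∑ d ∈ (Finset.Icc 1 n).filter (fun d => d ^ 6 ∣ n), (μ d : ℤ) :=
    (Finset.sum_filter _ _).symm
  have hstep2 : ∑ d ∈ (Finset.Icc 1 n).filter (fun d => d ^ 6 ∣ n), (μ d : ℤ)
      = ∑ d ∈ r.divisors, (μ d : ℤ) := by
    rw [← Finset.sum_filter_of_ne (s := (Finset.Icc 1 n).filter (fun d => d ^ 6 ∣ n))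
        (p := Squarefree) (fun x _ hx => moebius_ne_zero_iff_squarefree.mp hx),
      ← Finset.sum_filter_of_ne (s := r.divisors)
        (p := Squarefree) (fun x _ hx => moebius_ne_zero_iff_squarefree.mp hx)]
    congr 1
    ext d
    simp only [Finset.mem_filter, Finset.mem_Icc, Nat.mem_divisors]
    constructor
    · rintro ⟨⟨⟨h1, h2⟩, h6⟩, hsq⟩
      exact ⟨⟨(key d hsq).mp h6, hr0⟩, hsq⟩
    · rintro ⟨⟨hdr, -⟩, hsq⟩
      have hd1 : 1 ≤ d := Nat.one_le_iff_ne_zero.mpr hsq.ne_zero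
      have hdn : d ∣ n := hdr.trans hr_dvd
      exact ⟨⟨⟨hd1, Nat.le_of_dvd hn hdn⟩, (key d hsq).mpr hdr⟩, hsq⟩
  have hstep3 : ∑ d ∈ r.divisors, (μ d : ℤ) = if r = 1 then 1 else 0 := by
    have := congrArg (fun f : ArithmeticFunction ℤ => f r) moebius_mul_coe_zeta
    simpa only [coe_mul_zeta_apply, one_apply] using this
  have hlast : (r = 1) ↔ NatFree6 n := by
    constructor
    · intro h1 p hp hpdvd
      have hpn : p ∣ n := dvd_trans (dvd_pow_self p (by norm_num : (6:ℕ) ≠ 0)) hpdvd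
      have hpF : p ∈ F := Finset.mem_filter.mpr
        ⟨Nat.mem_primeFactors.mpr ⟨hp, hpn, hn0⟩, hpdvd⟩
      have : p ∣ r := Finset.dvd_prod_of_mem _ hpF
      rw [h1] at this
      exact absurd (Nat.eq_one_of_dvd_one this) hp.one_lt.ne'
    · intro hfree
      have hFempty : F = ∅ := by
        rw [Finset.eq_empty_iff_forall_notMem]
        intro p hp
        exact hfree p (hFprime p hp) (hFpow p hp)
      rw [hr, hFempty, Finset.prod_empty]
  rw [hstep1, hstep2, hstep3]
  simp only [hlast]

open Classical in
noncomputable def Q6 (N : ℕ) : ℕ := ((Finset.Icc 1 N).filter NatFree6).card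

open Classical in
theorem card_dvd_Icc (N m : ℕ) :
    ((Finset.Icc 1 N).filter (fun n => m ∣ n)).card = N / m := by
  rw [← Nat.card_multiples N m]
  apply Finset.card_nbij' (i := fun n => n - 1) (j := fun e => e + 1)
  · intro a ha
    simp only [Finset.mem_coe, Finset.mem_filter, Finset.mem_Icc, Finset.mem_range] at ha ⊢
    refine ⟨by omega, ?_⟩
    have h : a - 1 + 1 = a := by omega
    rw [h]; exact ha.2
  · intro a ha
    simp only [Finset.mem_coe, Finset.mem_filter, Finset.mem_Icc, Finset.mem_range] at ha ⊢
    exact ⟨⟨by omega, by omega⟩, ha.2⟩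
  · intro a ha
    simp only [Finset.mem_coe, Finset.mem_filter, Finset.mem_Icc] at ha ⊢
    omega
  · intro a ha
    dsimp only
    omega

open Classical in
theorem Q6_eq (N : ℕ) (hN : 1 ≤ N) :
    (Q6 N : ℤ) = ∑ d ∈ Finset.Icc 1 N, (μ d : ℤ) * (N / d ^ 6 : ℕ) := by
  have h1 : (Q6 N : ℤ) = ∑ n ∈ Finset.Icc 1 N, if NatFree6 n then (1:ℤ) else 0 := by
    rw [Q6, Finset.card_filter]
    push_cast
    rfl
  rw [h1]
  have h2 : ∀ n ∈ Finset.Icc 1 N, (if NatFree6 n then (1:ℤ) else 0)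
      = ∑ d ∈ Finset.Icc 1 N, if d ^ 6 ∣ n then (μ d : ℤ) else 0 := by
    intro n hn
    rw [Finset.mem_Icc] at hn
    rw [← moebius_indicator hn.1]
    apply Finset.sum_subset (Finset.Icc_subset_Icc le_rfl hn.2)
    intro d hd hdn
    rw [Finset.mem_Icc] at hd hdn
    have hdn' : n < d := by omega
    rw [if_neg]
    intro hdvd
    have : d ^ 6 ≤ n := Nat.le_of_dvd (by omega) hdvd
    have : d ≤ d ^ 6 := Nat.le_self_pow (by norm_num) d
    omega
  rw [Finset.sum_congr rfl h2, Finset.sum_comm]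
  apply Finset.sum_congr rfl
  intro d _
  rw [← Finset.sum_filter, Finset.sum_const, card_dvd_Icc, nsmul_eq_mul, mul_comm]

noncomputable def f6 (N : ℕ) (d : ℕ) : ℝ := (μ d : ℝ) * ((N / d ^ 6 : ℕ) : ℝ) / N

theorem f6_zero_left (N : ℕ) : f6 N 0 = 0 := by simp [f6]

theorem f6_eq_zero_of_gt {N d : ℕ} (h : N < d) : f6 N d = 0 := by
  have h6 : N < d ^ 6 := lt_of_lt_of_le h (Nat.le_self_pow (by norm_num) d)
  simp [f6, Nat.div_eq_of_lt h6]

theorem Q6_div_eq (N : ℕ) (hN : 1 ≤ N) : (Q6 N : ℝ) / N = ∑' d : ℕ, f6 N d := by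
  rw [tsum_eq_sum (s := Finset.Icc 1 N) (fun d hd => by
    rw [Finset.mem_Icc] at hd
    rcases Nat.eq_zero_or_pos d with rfl | hd1
    · exact f6_zero_left N
    · exact f6_eq_zero_of_gt (by omega))]
  have : (Q6 N : ℝ) = ∑ d ∈ Finset.Icc 1 N, (μ d : ℝ) * ((N / d ^ 6 : ℕ) : ℝ) := by
    have h := Q6_eq N hN
    calc (Q6 N : ℝ) = ((Q6 N : ℤ) : ℝ) := by norm_num
    _ = _ := by rw [h]; simp only [Int.cast_sum, Int.cast_mul, Int.cast_natCast]
  rw [this, Finset.sum_div]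
  exact Finset.sum_congr rfl (fun d _ => by rw [f6])

theorem f6_bound {N : ℕ} (hN : 1 ≤ N) (d : ℕ) : ‖f6 N d‖ ≤ 1 / (d : ℝ) ^ 6 := by
  rcases Nat.eq_zero_or_pos d with rfl | hd
  · simp [f6_zero_left]
  have hN0 : (0:ℝ) < N := by exact_mod_cast hN
  have hd0 : (0:ℝ) < (d:ℝ) ^ 6 := by positivity
  rw [f6, Real.norm_eq_abs, abs_div, abs_mul, abs_of_nonneg (by positivity : (0:ℝ) ≤ ((N / d ^ 6 : ℕ) : ℝ)), abs_of_nonneg hN0.le]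
  have h1 : ((N / d ^ 6 : ℕ) : ℝ) ≤ (N : ℝ) / (d : ℝ) ^ 6 := by
    have := Nat.cast_div_le (α := ℝ) (m := N) (n := d ^ 6)
    push_cast at this
    exact this
  calc |((μ d : ℤ) : ℝ)| * ((N / d ^ 6 : ℕ) : ℝ) / N
      ≤ 1 * ((N : ℝ) / (d : ℝ) ^ 6) / N := by
        gcongr
        exact abs_moebius_real d
    _ = 1 / (d : ℝ) ^ 6 := by field_simp

theorem f6_tendsto (d : ℕ) :
    Tendsto (fun N : ℕ => f6 N d) atTop (nhds ((μ d : ℝ) / (d : ℝ) ^ 6)) := by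
  rcases Nat.eq_zero_or_pos d with rfl | hd
  · simp only [f6_zero_left]
    simpa using tendsto_const_nhds
  have hm : (0:ℝ) < ((d ^ 6 : ℕ) : ℝ) := by positivity
  -- (N / d^6 : ℕ) = ⌊(N:ℝ)/(d^6:ℕ)⌋₊
  have hfl : ∀ N : ℕ, ((N / d ^ 6 : ℕ) : ℝ) = (⌊(N : ℝ) / ((d ^ 6 : ℕ) : ℝ)⌋₊ : ℝ) := by
    intro N
    rw [Nat.floor_div_natCast, Nat.floor_natCast]
  have key : Tendsto (fun x : ℝ => (⌊x / ((d ^ 6 : ℕ) : ℝ)⌋₊ : ℝ) / x) atTop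
      (nhds (1 / ((d ^ 6 : ℕ) : ℝ))) := by
    have h1 : Tendsto (fun x : ℝ => x / ((d ^ 6 : ℕ) : ℝ)) atTop atTop :=
      tendsto_id.atTop_div_const hm
    have h2 : Tendsto (fun x : ℝ => (⌊x / ((d ^ 6 : ℕ) : ℝ)⌋₊ : ℝ) / (x / ((d ^ 6 : ℕ) : ℝ)))
        atTop (nhds 1) := tendsto_nat_floor_div_atTop.comp h1
    have h3 := h2.mul (tendsto_const_nhds (x := 1 / ((d ^ 6 : ℕ) : ℝ)) (f := atTop))
    rw [one_mul] at h3
    apply h3.congr'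
    filter_upwards [eventually_gt_atTop (0:ℝ)] with x hx
    field_simp
  have key2 : Tendsto (fun N : ℕ => (⌊(N:ℝ) / ((d ^ 6 : ℕ) : ℝ)⌋₊ : ℝ) / N) atTop
      (nhds (1 / ((d ^ 6 : ℕ) : ℝ))) := key.comp tendsto_natCast_atTop_atTop
  have h4 := key2.const_mul ((μ d : ℤ) : ℝ)
  have hval : ((μ d : ℤ) : ℝ) * (1 / ((d ^ 6 : ℕ) : ℝ)) = (μ d : ℝ) / (d : ℝ) ^ 6 := by
    push_cast
    ring
  rw [hval] at h4
  exact h4.congr (fun N => by rw [f6, hfl N]; ring)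

theorem Q6_tendsto : Tendsto (fun N : ℕ => (Q6 N : ℝ) / N) atTop (nhds (945 / Real.pi ^ 6)) := by
  have hdom := tendsto_tsum_of_dominated_convergence
    (f := f6) (g := fun d => (μ d : ℝ) / (d : ℝ) ^ 6) (bound := fun d => 1 / (d : ℝ) ^ 6)
    (𝓕 := atTop)
    (Real.summable_one_div_nat_pow.mpr (by norm_num)) f6_tendsto
    (by filter_upwards [eventually_ge_atTop 1] with N hN; exact f6_bound hN)
  rw [moebius_sum] at hdom
  apply hdom.congr'
  filter_upwards [eventually_ge_atTop 1] with N hN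
  exact (Q6_div_eq N hN).symm

open Classical in
theorem ncard_eq (x : ℝ) (hx : 1 ≤ x) :
    {n : ℤ | SixthPowerFree n ∧ |(n : ℝ)| ≤ x}.ncard = 2 * Q6 ⌊x⌋₊ := by
  classical
  set F : Finset ℕ := (Finset.Icc 1 ⌊x⌋₊).filter NatFree6 with hF
  set G : Finset ℤ := F.image (fun n : ℕ => (n : ℤ)) ∪ F.image (fun n : ℕ => -(n : ℤ)) with hG
  have hx0 : (0:ℝ) ≤ x := le_trans zero_le_one hx
  have hmem : ∀ n : ℕ, n ∈ F ↔ (1 ≤ n ∧ n ≤ ⌊x⌋₊ ∧ NatFree6 n) := by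
    intro n; simp [hF, Finset.mem_filter, Finset.mem_Icc, and_assoc]
  have hset : {n : ℤ | SixthPowerFree n ∧ |(n : ℝ)| ≤ x} = ↑G := by
    ext n
    simp only [Set.mem_setOf_eq, hG, Finset.coe_union, Set.mem_union, Finset.coe_image,
      Set.mem_image, Finset.mem_coe]
    constructor
    · rintro ⟨⟨hn0, hnp⟩, hnx⟩
      have ha1 : 1 ≤ n.natAbs := Int.natAbs_pos.mpr hn0
      have hax : (n.natAbs : ℝ) ≤ x := by
        rw [Nat.cast_natAbs, Int.cast_abs]
        exact hnx
      have haf : n.natAbs ≤ ⌊x⌋₊ := Nat.le_floor hax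
      have hfree : NatFree6 n.natAbs := by
        intro p hp hdvd
        apply hnp p hp
        have h1 : ((p : ℤ)) ^ 6 ∣ (n.natAbs : ℤ) := by exact_mod_cast Int.natCast_dvd_natCast.mpr hdvd
        exact h1.trans (Int.natAbs_dvd.mpr dvd_rfl)
      have hmemF : n.natAbs ∈ F := (hmem _).mpr ⟨ha1, haf, hfree⟩
      rcases Int.natAbs_eq n with h | h
      · exact Or.inl ⟨n.natAbs, hmemF, h.symm⟩
      · exact Or.inr ⟨n.natAbs, hmemF, h.symm⟩
    · intro h
      have main : ∀ a : ℕ, a ∈ F → SixthPowerFree (a : ℤ) ∧ |((a:ℤ) : ℝ)| ≤ x := by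
        intro a haF
        obtain ⟨ha1, haf, hfree⟩ := (hmem a).mp haF
        refine ⟨⟨by exact_mod_cast Nat.one_le_iff_ne_zero.mp ha1, ?_⟩, ?_⟩
        · intro p hp hdvd
          apply hfree p hp
          exact_mod_cast Int.natCast_dvd_natCast.mp (by exact_mod_cast hdvd)
        · rw [Int.cast_natCast, abs_of_nonneg (by positivity)]
          exact le_trans (by exact_mod_cast Nat.le_floor_iff hx0 |>.mp (by exact haf))
            le_rfl
      rcases h with ⟨a, haF, rfl⟩ | ⟨a, haF, rfl⟩
      · exact main a haF
      · obtain ⟨⟨h0, hp⟩, hle⟩ := main a haF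
        refine ⟨⟨by simpa using h0, fun p hpp hd => hp p hpp (by simpa using (dvd_neg).mp hd)⟩, ?_⟩
        rw [Int.cast_neg, abs_neg]
        exact hle
  rw [hset, Set.ncard_coe_finset]
  have hinj1 : Set.InjOn (fun n : ℕ => (n : ℤ)) ↑F := fun a _ b _ h => by
    simpa using h
  have hinj2 : Set.InjOn (fun n : ℕ => -(n : ℤ)) ↑F := fun a _ b _ h => by
    simpa using h
  have hdisj : Disjoint (F.image (fun n : ℕ => (n : ℤ))) (F.image (fun n : ℕ => -(n : ℤ))) := by
    rw [Finset.disjoint_left]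
    rintro z hz1 hz2
    obtain ⟨a, ha, rfl⟩ := Finset.mem_image.mp hz1
    obtain ⟨b, hb, hba⟩ := Finset.mem_image.mp hz2
    have ha1 : 1 ≤ a := ((hmem a).mp ha).1
    have hb1 : 1 ≤ b := ((hmem b).mp hb).1
    omega
  rw [hG, Finset.card_union_of_disjoint hdisj, Finset.card_image_of_injOn hinj1,
    Finset.card_image_of_injOn hinj2, Q6]
  ring

end SPFAux2

/-- The number of sixth-power free integers `n` with `|n| ≤ x` is asymptotic to
`(2/ζ(6))·x = (1890/π⁶)·x` as `x → ∞`. -/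
theorem sixthPowerFree_count_asymptotic :
    Tendsto
      (fun x : ℝ => (({n : ℤ | SixthPowerFree n ∧ |(n : ℝ)| ≤ x}.ncard : ℝ)) / x)
      atTop (nhds (1890 / Real.pi ^ 6)) := by
  have h1 : Tendsto (fun x : ℝ => (Q6 ⌊x⌋₊ : ℝ) / (⌊x⌋₊ : ℝ)) atTop
      (nhds (945 / Real.pi ^ 6)) := Q6_tendsto.comp tendsto_nat_floor_atTop
  have h2 : Tendsto (fun x : ℝ => 2 * ((⌊x⌋₊ : ℝ) / x)) atTop (nhds (2 * 1)) :=
    tendsto_nat_floor_div_atTop.const_mul 2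
  have h3 := h1.mul h2
  have hval : 945 / Real.pi ^ 6 * (2 * 1) = 1890 / Real.pi ^ 6 := by ring
  rw [hval] at h3
  apply h3.congr'
  filter_upwards [eventually_ge_atTop (1:ℝ)] with x hx
  have hfl : 1 ≤ ⌊x⌋₊ := Nat.le_floor (by exact_mod_cast hx)
  have hne : ((⌊x⌋₊ : ℕ) : ℝ) ≠ 0 := by positivity
  have hxne : x ≠ 0 := by linarith
  rw [ncard_eq x hx]
  push_cast
  field_simp
end

section
/- Let z₀ ∈ ℂ, let F₁ and F₂ be functions meromorphic at z₀, let M ≥ 1, and let a₁,…,a_M be pairwise distinct complex numbers. Set f_j = F₁ + a_j·F₂ for 1 ≤ j ≤ M. Then for all indices j with at most one exception, the order of f_j at z₀ equals min{ord_{z₀}(F₁), ord_{z₀}(F₂)}; that is, the set of indices j with ord_{z₀}(f_j) ≠ min{ord_{z₀}(F₁), ord_{z₀}(F₂)} has at most one element. -/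
open Filter Topology

private lemma myOrder_le_of_rep {f : ℂ → ℂ} {x : ℂ} (hf : MeromorphicAt f x) (n : ℤ)
    {G : ℂ → ℂ} (hG : AnalyticAt ℂ G x)
    (h : ∀ᶠ z in 𝓝[≠] x, f z = (z - x) ^ n * G z) : (n : WithTop ℤ) ≤ (meromorphicOrderAt f x) := by
  rcases eq_or_ne (analyticOrderAt G x) ⊤ with ht | ht
  · have : (meromorphicOrderAt f x) = ⊤ := by
      rw [meromorphicOrderAt_eq_top_iff]
      filter_upwards [h, (analyticOrderAt_eq_top.mp ht).filter_mono nhdsWithin_le_nhds]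
        with z h1 h2
      rw [h1, h2, mul_zero]
    simp [this]
  · obtain ⟨m, hm⟩ := WithTop.ne_top_iff_exists.mp ht
    obtain ⟨g, hg, hgx, hrep⟩ := (hG.analyticOrderAt_eq_natCast (n := m)).mp hm.symm
    have : (meromorphicOrderAt f x) = ((n + m : ℤ) : WithTop ℤ) := by
      rw [meromorphicOrderAt_eq_int_iff hf]
      refine ⟨g, hg, hgx, ?_⟩
      filter_upwards [h, hrep.filter_mono nhdsWithin_le_nhds,
        self_mem_nhdsWithin] with z h1 h2 hz
      have hzx : z - x ≠ 0 := sub_ne_zero.mpr hz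
      rw [h1, h2, smul_eq_mul, smul_eq_mul, zpow_add₀ hzx, zpow_natCast, mul_assoc]
    rw [this]
    exact_mod_cast le_add_of_nonneg_right (by positivity)

private lemma myExists_rep {f : ℂ → ℂ} {x : ℂ} (hf : MeromorphicAt f x) (n : ℤ)
    (h : (n : WithTop ℤ) ≤ (meromorphicOrderAt f x)) :
    ∃ G : ℂ → ℂ, AnalyticAt ℂ G x ∧ ∀ᶠ z in 𝓝[≠] x, f z = (z - x) ^ n * G z := by
  rcases eq_or_ne (meromorphicOrderAt f x) ⊤ with ht | ht
  · refine ⟨fun _ => 0, analyticAt_const, ?_⟩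
    filter_upwards [meromorphicOrderAt_eq_top_iff.mp ht] with z h1
    rw [h1, mul_zero]
  · obtain ⟨m, hm⟩ := WithTop.ne_top_iff_exists.mp ht
    obtain ⟨g, hg, hgx, hrep⟩ := (meromorphicOrderAt_eq_int_iff (n := m) hf).mp hm.symm
    have hnm : n ≤ m := by exact_mod_cast hm ▸ h
    refine ⟨fun z => (z - x) ^ (m - n).toNat * g z,
      ((analyticAt_id.sub analyticAt_const).pow _).mul hg, ?_⟩
    filter_upwards [hrep, self_mem_nhdsWithin] with z h1 hz
    have hzx : z - x ≠ 0 := sub_ne_zero.mpr hz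
    rw [h1, smul_eq_mul, ← mul_assoc, ← zpow_natCast (z - x) (m - n).toNat,
      ← zpow_add₀ hzx, Int.toNat_of_nonneg (by omega), add_sub_cancel]

/-- Order of a linear combination is at least the min of the orders. -/
private lemma myOrder_min_le_comb {f g h : ℂ → ℂ} {x : ℂ} (hf : MeromorphicAt f x)
    (hg : MeromorphicAt g x) (hh : MeromorphicAt h x) (c₁ c₂ : ℂ)
    (heq : ∀ z, h z = c₁ * f z + c₂ * g z) :
    min (meromorphicOrderAt f x) (meromorphicOrderAt g x) ≤ (meromorphicOrderAt h x) := by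
  rcases eq_or_ne (min (meromorphicOrderAt f x) (meromorphicOrderAt g x)) ⊤ with ht | ht
  · have h1 : (meromorphicOrderAt f x) = ⊤ := by simpa using (min_eq_top.mp ht).1
    have h2 : (meromorphicOrderAt g x) = ⊤ := by simpa using (min_eq_top.mp ht).2
    have : (meromorphicOrderAt h x) = ⊤ := by
      rw [meromorphicOrderAt_eq_top_iff]
      filter_upwards [meromorphicOrderAt_eq_top_iff.mp h1, meromorphicOrderAt_eq_top_iff.mp h2]
        with z e2 e3
      rw [heq z, e2, e3, mul_zero, mul_zero, add_zero]
    simp [this, ht]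
  · obtain ⟨n, hn⟩ := WithTop.ne_top_iff_exists.mp ht
    obtain ⟨G₁, hG₁, hr₁⟩ := myExists_rep hf n (hn ▸ min_le_left _ _)
    obtain ⟨G₂, hG₂, hr₂⟩ := myExists_rep hg n (hn ▸ min_le_right _ _)
    rw [← hn]
    refine myOrder_le_of_rep hh n (G := fun z => c₁ * G₁ z + c₂ * G₂ z)
      ((analyticAt_const.mul hG₁).add (analyticAt_const.mul hG₂)) ?_
    filter_upwards [hr₁, hr₂] with z e2 e3
    rw [heq z, e2, e3]; ring

/-- If `F₁, F₂` are meromorphic at `z₀`, `a₁, …, a_M` are pairwise distinct complex numbers,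
and `f_j = F₁ + a_j·F₂`, then for all indices `j` with at most one exception the order of
`f_j` at `z₀` equals `min {ord_{z₀}(F₁), ord_{z₀}(F₂)}` (the minimum taken in `ℤ ∪ {+∞}`). -/
theorem order_eq_min_with_one_exception (z₀ : ℂ) (F₁ F₂ : ℂ → ℂ)
    (hF₁ : MeromorphicAt F₁ z₀) (hF₂ : MeromorphicAt F₂ z₀)
    (M : ℕ) (hM : 1 ≤ M) (a : Fin M → ℂ) (ha : Function.Injective a)
    (hf : ∀ j : Fin M, MeromorphicAt (fun z => F₁ z + a j * F₂ z) z₀) :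
    {j : Fin M | meromorphicOrderAt (fun z => F₁ z + a j * F₂ z) z₀ ≠
      min (meromorphicOrderAt F₁ z₀) (meromorphicOrderAt F₂ z₀)}.Subsingleton := by
  intro j hj k hk
  by_contra hjk
  have hjk' : a j - a k ≠ 0 := sub_ne_zero.mpr fun h => hjk (ha h)
  set μ := min (meromorphicOrderAt F₁ z₀) (meromorphicOrderAt F₂ z₀) with hμ
  have key : ∀ i : Fin M, μ ≤ (meromorphicOrderAt (fun z => F₁ z + a i * F₂ z) z₀) := fun i =>
    myOrder_min_le_comb hF₁ hF₂ (hf i) 1 (a i) (fun z => by ring)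
  have hjlt : μ < (meromorphicOrderAt (fun z => F₁ z + a j * F₂ z) z₀) := lt_of_le_of_ne (key j) (Ne.symm hj)
  have hklt : μ < (meromorphicOrderAt (fun z => F₁ z + a k * F₂ z) z₀) := lt_of_le_of_ne (key k) (Ne.symm hk)
  have hlt : μ < min (meromorphicOrderAt (fun z => F₁ z + a j * F₂ z) z₀) (meromorphicOrderAt (fun z => F₁ z + a k * F₂ z) z₀) := lt_min hjlt hklt
  -- F₂ is a combination of f_j and f_k
  have h2 : min (meromorphicOrderAt (fun z => F₁ z + a j * F₂ z) z₀) (meromorphicOrderAt (fun z => F₁ z + a k * F₂ z) z₀) ≤ (meromorphicOrderAt F₂ z₀) := by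
    refine myOrder_min_le_comb (hf j) (hf k) hF₂ (a j - a k)⁻¹ (-(a j - a k)⁻¹) fun z => ?_
    field_simp
    ring
  -- F₁ is a combination of f_j and f_k
  have h1 : min (meromorphicOrderAt (fun z => F₁ z + a j * F₂ z) z₀) (meromorphicOrderAt (fun z => F₁ z + a k * F₂ z) z₀) ≤ (meromorphicOrderAt F₁ z₀) := by
    refine myOrder_min_le_comb (hf j) (hf k) hF₁
      (-(a k) * (a j - a k)⁻¹) (a j * (a j - a k)⁻¹) fun z => ?_
    field_simp
    ring
  exact absurd (lt_of_lt_of_le hlt (le_min h1 h2)) (lt_irrefl μ)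
end
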